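/- Let u^1, …, u^m ∈ ℝ≥0^n all be nonzero and let v ∈ ℝ≥0^n. For each i let N_i = { j ∈ supp(v) ∩ supp(u^i) : (1/u^i_j) • u^i ≤ (1/v_j) • v componentwise }. Then v ∈ span{u^1, …, u^m} if and only if ⋃_{i=1}^m N_i = supp(v). -/

import Mathlib

open scoped NNReal

/-- The max-algebraic span of `S`: all vectors `⨆_{x ∈ S} λ_x • x` where only
finitely many coefficients `λ_x` are nonzero (`MaxSpan ∅ = {0}`). -/
def MaxSpan {n : ℕ} (S : Set (Fin n → ℝ≥0)) : Set (Fin n → ℝ≥0) :=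
  {u | ∃ (F : Finset (Fin n → ℝ≥0)) (lam : (Fin n → ℝ≥0) → ℝ≥0),
    ↑F ⊆ S ∧ u = F.sup (fun x => lam x • x)}

/-- A max cone: a subset of `ℝ≥0ⁿ` closed under pointwise max `⊔` and under
multiplication by nonnegative scalars. -/
def MaxCone {n : ℕ} (K : Set (Fin n → ℝ≥0)) : Prop :=
  0 ∈ K ∧ (∀ x ∈ K, ∀ y ∈ K, x ⊔ y ∈ K) ∧ (∀ (c : ℝ≥0), ∀ x ∈ K, c • x ∈ K)

/-- `u` is an extremal in `K` if `u = v ⊔ w` with `v, w ∈ K` implies `u = v` or `u = w`. -/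
def IsExtremal {n : ℕ} (K : Set (Fin n → ℝ≥0)) (u : Fin n → ℝ≥0) : Prop :=
  u ∈ K ∧ ∀ v ∈ K, ∀ w ∈ K, u = v ⊔ w → u = v ∨ u = w

/-- A vector is scaled if its max norm `⨆ i, x i` equals `1`. -/
def Scaled {n : ℕ} (x : Fin n → ℝ≥0) : Prop := (⨆ i, x i) = 1

/-- The support of a vector. -/
def supp {n : ℕ} (v : Fin n → ℝ≥0) : Set (Fin n) := {j | 0 < v j}

/-- For `j ∈ supp u`, `rescale u j = (1 / u j) • u`, the `j`-scaling `u(j)`. -/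
noncomputable def rescale {n : ℕ} (u : Fin n → ℝ≥0) (j : Fin n) : Fin n → ℝ≥0 :=
  (u j)⁻¹ • u

/-- `T(j) = {u(j) : u ∈ T, j ∈ supp u}`. -/
noncomputable def setScale {n : ℕ} (T : Set (Fin n → ℝ≥0)) (j : Fin n) :
    Set (Fin n → ℝ≥0) :=
  {y | ∃ u ∈ T, j ∈ supp u ∧ y = rescale u j}

/-- `u` is minimal in `T` if `v ∈ T` and `v ≤ u` imply `v = u`. -/
def MinimalIn {n : ℕ} (T : Set (Fin n → ℝ≥0)) (u : Fin n → ℝ≥0) : Prop :=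
  u ∈ T ∧ ∀ v ∈ T, v ≤ u → v = u

/-- A set is totally dependent if each of its elements is a max combination of
the remaining ones. -/
def TotallyDependent {n : ℕ} (S : Set (Fin n → ℝ≥0)) : Prop :=
  ∀ x ∈ S, x ∈ MaxSpan (S \ {x})

/-- A set is independent if none of its elements is a max combination of
the remaining ones. -/
def IndependentSet {n : ℕ} (S : Set (Fin n → ℝ≥0)) : Prop :=
  ∀ x ∈ S, x ∉ MaxSpan (S \ {x})

/-- A basis for `K` is an independent set of generators for `K`. -/
def IsBasis {n : ℕ} (S K : Set (Fin n → ℝ≥0)) : Prop :=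
  IndependentSet S ∧ MaxSpan S = K

/-- for nonzero `u¹, …, uᵐ` and `v`, with
`Nᵢ = {j ∈ supp v ∩ supp uⁱ : uⁱ(j) ≤ v(j)}`, we have
`v ∈ span{u¹, …, uᵐ}` iff `⋃ i, Nᵢ = supp v`. -/
private lemma inv_mul_le_inv_mul {a b x y : ℝ≥0} (ha : 0 < a) (hb : 0 < b) :
    a⁻¹ * x ≤ b⁻¹ * y ↔ b * x ≤ a * y := by
  rw [inv_mul_eq_div, inv_mul_eq_div, div_le_div_iff₀ ha hb, mul_comm x b, mul_comm y a]

theorem stmt18 {n m : ℕ} (u : Fin m → (Fin n → ℝ≥0)) (hu : ∀ i, u i ≠ 0)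
    (v : Fin n → ℝ≥0) :
    v ∈ MaxSpan (Set.range u) ↔
      (⋃ i : Fin m,
        {j | j ∈ supp v ∧ j ∈ supp (u i) ∧ rescale (u i) j ≤ rescale v j})
        = supp v := by
  constructor
  · rintro ⟨F, lam, hF, hv⟩
    apply Set.Subset.antisymm
    · rintro j hj
      rcases Set.mem_iUnion.mp hj with ⟨i, hji⟩
      exact hji.1
    · intro j hj
      have hvj : 0 < v j := hj
      have hsup : v j = F.sup (fun x => (lam x • x) j) := by
        rw [hv]; exact Finset.sup_apply F _ j
      have hFne : F.Nonempty := by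
        rcases F.eq_empty_or_nonempty with h | h
        · exfalso; rw [h] at hsup; simp at hsup; rw [hsup] at hvj; exact lt_irrefl 0 hvj
        · exact h
      obtain ⟨x, hxF, hx⟩ := Finset.exists_mem_eq_sup F hFne (fun x => (lam x • x) j)
      obtain ⟨i, hi⟩ := hF hxF
      subst hi
      have heq : v j = lam (u i) * u i j := by rw [hsup, hx]; simp
      have huj : 0 < u i j := by
        rcases eq_or_lt_of_le (zero_le : 0 ≤ u i j) with h0 | h; swap
        · exact h
        · exfalso; rw [← h0, mul_zero] at heq; rw [heq] at hvj; exact lt_irrefl 0 hvj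
      have hle : lam (u i) • u i ≤ v := by
        rw [hv]; exact Finset.le_sup (f := fun x => lam x • x) hxF
      refine Set.mem_iUnion.mpr ⟨i, hj, huj, ?_⟩
      intro k
      simp only [rescale, Pi.smul_apply, smul_eq_mul]
      rw [inv_mul_le_inv_mul huj hvj]
      have hk : lam (u i) * u i k ≤ v k := by
        have := hle k; simpa using this
      calc v j * u i k = lam (u i) * u i j * u i k := by rw [heq]
        _ = u i j * (lam (u i) * u i k) := by ring
        _ ≤ u i j * v k := by exact mul_le_mul_right hk _
  · intro hN
    classical
    set lam : (Fin n → ℝ≥0) → ℝ≥0 := fun x => Finset.univ.sup (fun j : Fin n =>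
      if 0 < v j ∧ 0 < x j ∧ rescale x j ≤ rescale v j then v j * (x j)⁻¹ else 0) with hlam
    refine ⟨Finset.image u Finset.univ, lam, ?_, ?_⟩
    · intro x hx
      rcases Finset.mem_image.mp (by exact_mod_cast hx) with ⟨i, _, hi⟩
      exact ⟨i, hi⟩
    · apply le_antisymm
      · -- v ≤ sup
        intro k
        rcases eq_or_lt_of_le (zero_le : 0 ≤ v k) with h0 | hk
        · rw [← h0]; exact zero_le
        · have hk' : k ∈ supp v := hk
          rw [← hN] at hk'
          rcases Set.mem_iUnion.mp hk' with ⟨i, hkv, hki, hresc⟩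
          have h1 : lam (u i) • u i ≤ (Finset.image u Finset.univ).sup (fun x => lam x • x) :=
            Finset.le_sup (f := fun x => lam x • x)
              (Finset.mem_image.mpr ⟨i, Finset.mem_univ i, rfl⟩)
          have h2 : v k * (u i k)⁻¹ ≤ lam (u i) := by
            have h := Finset.le_sup (f := fun j : Fin n =>
              if 0 < v j ∧ 0 < u i j ∧ rescale (u i) j ≤ rescale v j then v j * (u i j)⁻¹ else 0)
              (Finset.mem_univ k)
            rw [if_pos ⟨hkv, hki, hresc⟩] at h
            exact h
          calc v k = v k * (u i k)⁻¹ * u i k := by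
                rw [mul_assoc, inv_mul_cancel₀ (ne_of_gt hki), mul_one]
            _ ≤ lam (u i) * u i k := mul_le_mul_left h2 _
            _ = (lam (u i) • u i) k := rfl
            _ ≤ _ := h1 k
      · -- sup ≤ v
        apply Finset.sup_le
        intro x hx
        intro k
        simp only [Pi.smul_apply, smul_eq_mul]
        rcases eq_or_lt_of_le (zero_le : 0 ≤ x k) with h0 | hxk
        · rw [← h0, mul_zero]; exact zero_le
        · have hlamle : lam x ≤ v k * (x k)⁻¹ := by
            rw [hlam]
            apply Finset.sup_le
            intro j _
            split_ifs with hc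
            · obtain ⟨hvj, hxj, hresc⟩ := hc
              have := hresc k
              simp only [rescale, Pi.smul_apply, smul_eq_mul] at this
              rw [inv_mul_le_inv_mul hxj hvj] at this
              rw [mul_comm (v j) _, mul_comm (v k) _, inv_mul_le_inv_mul hxj hxk]
              calc x k * v j = v j * x k := mul_comm _ _
                _ ≤ x j * v k := this
            · exact zero_le
          calc lam x * x k ≤ v k * (x k)⁻¹ * x k := mul_le_mul_left hlamle _
            _ = v k := by rw [mul_assoc, inv_mul_cancel₀ (ne_of_gt hxk), mul_one]
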